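/- For integers n ≥ 2 and 2 ≤ k ≤ n/2, let P_p denote the Binomial(n,p) law. Then P_{k/n}(N ≥ k+1) ≥ P_{(k-1)/n}(N ≥ k). -/

import Mathlib

open Finset

/-- Bernoulli-based step: `(m+1)^(2m+1) ≤ m^m * (m+2)^(m+1)` in ℝ. -/
private lemma bern_step (m : ℕ) (hm : 1 ≤ m) :
    ((m : ℝ) + 1) ^ (2 * m + 1) ≤ (m : ℝ) ^ m * ((m : ℝ) + 2) ^ (m + 1) := by
  set x : ℝ := (m : ℝ) with hx
  have hx1 : (1 : ℝ) ≤ x := by rw [hx]; exact_mod_cast hm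
  have hx0 : (0 : ℝ) < x := by linarith
  have hxp : (0 : ℝ) < (x + 1) ^ 2 := by positivity
  have h2 : (-2 : ℝ) ≤ -(1 / (x + 1) ^ 2) := by
    have : 1 / (x + 1) ^ 2 ≤ 1 := by
      rw [div_le_one hxp]; nlinarith
    linarith
  have hb := one_add_mul_le_pow h2 (m + 1)
  have hcast : ((m + 1 : ℕ) : ℝ) = x + 1 := by push_cast [hx]; ring
  rw [hcast] at hb
  have h1 : 1 + (x + 1) * -(1 / (x + 1) ^ 2) = x / (x + 1) := by
    field_simp
    ring
  have h2' : 1 + -(1 / (x + 1) ^ 2) = x * (x + 2) / (x + 1) ^ 2 := by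
    field_simp
    ring
  rw [h1, h2'] at hb
  rw [div_pow] at hb
  rw [div_le_div_iff₀ (by linarith) (by positivity)] at hb
  -- hb : x * ((x+1)^2)^(m+1) ≤ (x*(x+2))^(m+1) * (x+1)
  have e1 : ((x + 1) ^ 2) ^ (m + 1) = (x + 1) ^ (2 * m + 1) * (x + 1) := by
    rw [← pow_mul, ← pow_succ]; ring_nf
  have e2 : (x * (x + 2)) ^ (m + 1) = x * (x ^ m * (x + 2) ^ (m + 1)) := by
    rw [mul_pow, pow_succ]; ring
  rw [e1, e2] at hb
  have hx1p : (0 : ℝ) < x + 1 := by linarith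
  have h3 : x * (x + 1) ^ (2 * m + 1) ≤ x * (x ^ m * (x + 2) ^ (m + 1)) :=
    le_of_mul_le_mul_right (by linarith) hx1p
  exact le_of_mul_le_mul_left h3 hx0

/-- Monotonicity of `(1+1/m)^m`. -/
private lemma e_mono (a b : ℕ) (ha : 1 ≤ a) (hab : a ≤ b) :
    (((a : ℝ) + 1) / a) ^ a ≤ (((b : ℝ) + 1) / b) ^ b := by
  induction b, hab using Nat.le_induction with
  | base => exact le_refl _
  | succ m hm ih =>
    refine ih.trans ?_
    have hm1 : 1 ≤ m := le_trans ha hm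
    have hm0 : (0 : ℝ) < m := by exact_mod_cast hm1
    have hm1' : (0 : ℝ) < (m : ℝ) + 1 := by linarith
    have hb := bern_step m hm1
    rw [div_pow, div_pow, div_le_div_iff₀ (by positivity) (by positivity)]
    push_cast
    calc ((m : ℝ) + 1) ^ m * ((m : ℝ) + 1) ^ (m + 1) = ((m : ℝ) + 1) ^ (2 * m + 1) := by
          rw [← pow_add]; ring_nf
      _ ≤ (m : ℝ) ^ m * ((m : ℝ) + 2) ^ (m + 1) := hb
      _ = ((m : ℝ) + 1 + 1) ^ (m + 1) * (m : ℝ) ^ m := by ring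

private lemma hasDeriv_F (n k : ℕ) (hk : 1 ≤ k) (hkn : k ≤ n) (t : ℝ) :
    HasDerivAt (fun t : ℝ => ∑ j ∈ Icc k n, (n.choose j : ℝ) * t ^ j * (1 - t) ^ (n - j))
      ((k : ℝ) * n.choose k * t ^ (k - 1) * (1 - t) ^ (n - k)) t := by
  set u : ℕ → ℝ := fun j => (j : ℝ) * n.choose j * t ^ (j - 1) * (1 - t) ^ (n - j) with hu
  have hterm : ∀ j ∈ Icc k n, HasDerivAt
      (fun t : ℝ => (n.choose j : ℝ) * t ^ j * (1 - t) ^ (n - j))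
      (u j - u (j + 1)) t := by
    intro j hj
    rw [mem_Icc] at hj
    have h1 : HasDerivAt (fun t : ℝ => (n.choose j : ℝ) * t ^ j)
        ((n.choose j : ℝ) * ((j : ℝ) * t ^ (j - 1))) t := (hasDerivAt_pow j t).const_mul _
    have hinner : HasDerivAt (fun t : ℝ => 1 - t) (-1) t := (hasDerivAt_id t).const_sub 1
    have h2 : HasDerivAt (fun t : ℝ => (1 - t) ^ (n - j))
        ((((n - j : ℕ) : ℝ) * (1 - t) ^ (n - j - 1)) * (-1)) t :=
      HasDerivAt.comp t (hasDerivAt_pow (n - j) (1 - t)) hinner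
    have hprod := h1.fun_mul h2
    refine hprod.congr_deriv (Eq.symm ?_)
    have hch : ((j : ℝ) + 1) * (n.choose (j + 1) : ℝ) = (n.choose j : ℝ) * ((n - j : ℕ) : ℝ) := by
      have := Nat.choose_succ_right_eq n j
      have h' := congrArg (fun z : ℕ => (z : ℝ)) this
      push_cast at h'
      linarith [h']
    have hexp : n - (j + 1) = n - j - 1 := by omega
    have hj1 : j + 1 - 1 = j := by omega
    rw [hu]
    simp only [hj1, hexp]
    push_cast at hch ⊢
    linear_combination (-(t ^ j * (1 - t) ^ (n - j - 1))) * hch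
  have hsum := HasDerivAt.fun_sum hterm
  refine hsum.congr_deriv (Eq.symm ?_)
  rw [← Finset.Ico_add_one_right_eq_Icc, Finset.sum_Ico_eq_sum_range]
  have ht := Finset.sum_range_sub' (fun i => u (k + i)) (n + 1 - k)
  simp only [← add_assoc] at ht
  rw [ht]
  have h1 : k + 0 = k := by omega
  have h2 : k + (n + 1 - k) = n + 1 := by omega
  rw [h1, h2]
  have h3 : u (n + 1) = 0 := by
    rw [hu]; simp [Nat.choose_succ_self]
  rw [h3, sub_zero, hu]

private lemma endpoint_ineq (n k : ℕ) (hk : 2 ≤ k) (hkn : 2 * k ≤ n) :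
    ((k : ℝ) / n) ^ (k - 1) * (1 - (k : ℝ) / n) ^ (n - k) ≤
      (((k : ℝ) - 1) / n) ^ (k - 1) * (1 - ((k : ℝ) - 1) / n) ^ (n - k) := by
  have hn0 : (0 : ℝ) < n := by
    have : 4 ≤ n := by omega
    positivity
  -- numerator inequality from e_mono
  have ha : 1 ≤ k - 1 := by omega
  have hab : k - 1 ≤ n - k := by omega
  have hmono := e_mono (k - 1) (n - k) ha hab
  have hca : ((k - 1 : ℕ) : ℝ) = (k : ℝ) - 1 := by
    have : (1 : ℕ) ≤ k := by omega
    push_cast [Nat.cast_sub this]; ring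
  have hcb : ((n - k : ℕ) : ℝ) = (n : ℝ) - k := by
    have : k ≤ n := by omega
    push_cast [Nat.cast_sub this]; ring
  rw [hca, hcb] at hmono
  have e1 : (k : ℝ) - 1 + 1 = (k : ℝ) := by ring
  rw [e1] at hmono
  have ha0 : (0 : ℝ) < (k : ℝ) - 1 := by
    have : (2 : ℝ) ≤ (k : ℝ) := by exact_mod_cast hk
    linarith
  have hb0 : (0 : ℝ) < (n : ℝ) - k := by
    have h2 : ((2 * k : ℕ) : ℝ) ≤ (n : ℝ) := by exact_mod_cast hkn
    have hk2 : (2 : ℝ) ≤ (k : ℝ) := by exact_mod_cast hk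
    push_cast at h2; linarith
  rw [div_pow, div_pow, div_le_div_iff₀ (by positivity) (by positivity)] at hmono
  -- hmono : k ^ (k-1) * ((n-k):ℝ) ^ (n-k) ≤ ((n:ℝ)-k+1) ^ (n-k) * ((k:ℝ)-1) ^ (k-1)
  have h1q : 1 - (k : ℝ) / n = ((n : ℝ) - k) / n := by field_simp
  have h1p : 1 - ((k : ℝ) - 1) / n = ((n : ℝ) - k + 1) / n := by field_simp; ring
  rw [h1q, h1p, div_pow, div_pow, div_pow, div_pow, div_mul_div_comm, div_mul_div_comm]
  rw [div_le_div_iff_of_pos_right (by positivity)]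
  linarith [hmono]

private lemma pointwise_bound (n k : ℕ) (hk : 2 ≤ k) (hkn : 2 * k ≤ n) (c : ℝ)
    (hc : c ∈ Set.Icc (((k : ℝ) - 1) / n) ((k : ℝ) / n)) :
    ((k : ℝ) / n) ^ (k - 1) * (1 - (k : ℝ) / n) ^ (n - k) ≤ c ^ (k - 1) * (1 - c) ^ (n - k) := by
  have hn0 : (0 : ℝ) < n := by
    have : 4 ≤ n := by omega
    positivity
  have hk2 : (2 : ℝ) ≤ (k : ℝ) := by exact_mod_cast hk
  have h2kn : 2 * (k : ℝ) ≤ n := by exact_mod_cast hkn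
  set p : ℝ := ((k : ℝ) - 1) / n with hpdef
  set q : ℝ := (k : ℝ) / n with hqdef
  obtain ⟨hcp, hcq⟩ := hc
  have hp0 : 0 < p := by
    apply div_pos (by linarith) hn0
  have hq0 : 0 < q := by positivity
  have hpq : p < q := by
    rw [hpdef, hqdef, div_lt_div_iff₀ hn0 hn0]
    nlinarith
  have hq1 : q < 1 := by
    rw [hqdef, div_lt_one hn0]; linarith
  have h1q0 : 0 < 1 - q := by linarith
  have h1p0 : 0 < 1 - p := by linarith
  have hc0 : 0 < c := lt_of_lt_of_le hp0 hcp
  have h1c0 : 0 < 1 - c := by linarith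
  set b : ℝ := (c - p) / (q - p) with hbdef
  set a : ℝ := 1 - b with hadef
  have hb0 : 0 ≤ b := div_nonneg (by linarith) (by linarith)
  have hb1 : b ≤ 1 := by
    rw [hbdef, div_le_one (by linarith)]; linarith
  have ha0 : 0 ≤ a := by rw [hadef]; linarith
  have hab : a + b = 1 := by rw [hadef]; ring
  have hceq : a * p + b * q = c := by
    have h : b * (q - p) = c - p := by
      rw [hbdef, div_mul_cancel₀ _ (sub_pos.mpr hpq).ne']
    rw [hadef]; linear_combination h
  have h1ceq : a * (1 - p) + b * (1 - q) = 1 - c := by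
    linear_combination hab - hceq
  have g1 : p ^ a * q ^ b ≤ c := by
    have := Real.geom_mean_le_arith_mean2_weighted ha0 hb0 hp0.le hq0.le hab
    linarith
  have g2 : (1 - p) ^ a * (1 - q) ^ b ≤ 1 - c := by
    have := Real.geom_mean_le_arith_mean2_weighted ha0 hb0 h1p0.le h1q0.le hab
    linarith
  set X : ℝ := p ^ (k - 1) * (1 - p) ^ (n - k) with hXdef
  set Y : ℝ := q ^ (k - 1) * (1 - q) ^ (n - k) with hYdef
  have hend : Y ≤ X := endpoint_ineq n k hk hkn
  have hY0 : 0 < Y := by rw [hYdef]; positivity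
  have hswap : ∀ (x : ℝ), 0 < x → ∀ (w : ℝ) (m : ℕ), (x ^ w) ^ m = (x ^ m) ^ w := by
    intro x hx w m
    rw [← Real.rpow_natCast (x ^ w) m, ← Real.rpow_mul hx.le, mul_comm,
      Real.rpow_mul hx.le, Real.rpow_natCast]
  have hrear : (p ^ a * q ^ b) ^ (k - 1) * ((1 - p) ^ a * (1 - q) ^ b) ^ (n - k)
      = X ^ a * Y ^ b := by
    rw [mul_pow, mul_pow, hswap p hp0, hswap q hq0, hswap (1 - p) h1p0, hswap (1 - q) h1q0,
      hXdef, hYdef, Real.mul_rpow (by positivity) (by positivity),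
      Real.mul_rpow (by positivity) (by positivity)]
    ring
  calc Y = Y ^ a * Y ^ b := by
        rw [← Real.rpow_add hY0, hab, Real.rpow_one]
    _ ≤ X ^ a * Y ^ b := by
        have := Real.rpow_le_rpow hY0.le hend ha0
        exact mul_le_mul_of_nonneg_right this (Real.rpow_nonneg hY0.le b)
    _ = (p ^ a * q ^ b) ^ (k - 1) * ((1 - p) ^ a * (1 - q) ^ b) ^ (n - k) := hrear.symm
    _ ≤ c ^ (k - 1) * (1 - c) ^ (n - k) := by
        apply mul_le_mul
        · exact pow_le_pow_left₀ (by positivity) g1 _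
        · exact pow_le_pow_left₀ (by positivity) g2 _
        · positivity
        · positivity

/-- For n ≥ 2 and 2 ≤ k ≤ n/2: P_{k/n}(N ≥ k+1) ≥ P_{(k-1)/n}(N ≥ k), where
P_p denotes the Binomial(n,p) law. -/
theorem binomial_tail_step (n k : ℕ) (hn : 2 ≤ n) (hk : 2 ≤ k) (hkn : 2 * k ≤ n) :
    ∑ j ∈ Finset.Icc k n,
        (n.choose j : ℝ) * (((k : ℝ) - 1) / n) ^ j * (1 - ((k : ℝ) - 1) / n) ^ (n - j) ≤
      ∑ j ∈ Finset.Icc (k + 1) n,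
        (n.choose j : ℝ) * ((k : ℝ) / n) ^ j * (1 - (k : ℝ) / n) ^ (n - j) := by
  have hn4 : 4 ≤ n := by omega
  have hn0 : (0 : ℝ) < n := by positivity
  have hk2 : (2 : ℝ) ≤ (k : ℝ) := by exact_mod_cast hk
  have h2kn : 2 * (k : ℝ) ≤ n := by exact_mod_cast hkn
  have hk1 : 1 ≤ k := by omega
  have hkn' : k ≤ n := by omega
  set p : ℝ := ((k : ℝ) - 1) / n with hpdef
  set q : ℝ := (k : ℝ) / n with hqdef
  set F : ℝ → ℝ := fun t => ∑ j ∈ Icc k n, (n.choose j : ℝ) * t ^ j * (1 - t) ^ (n - j) with hF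
  have hD : ∀ t : ℝ, HasDerivAt F ((k : ℝ) * n.choose k * t ^ (k - 1) * (1 - t) ^ (n - k)) t :=
    fun t => hasDeriv_F n k hk1 hkn' t
  have hpq : p < q := by
    rw [hpdef, hqdef, div_lt_div_iff₀ hn0 hn0]; nlinarith
  have hcont : ContinuousOn F (Set.Icc p q) :=
    (Differentiable.continuous fun t => (hD t).differentiableAt).continuousOn
  obtain ⟨c, hcmem, hceq⟩ := exists_hasDerivAt_eq_slope F _ hpq hcont (fun x _ => hD x)
  have hqp : q - p = 1 / n := by
    rw [hpdef, hqdef]; field_simp; ring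
  have hFdiff : F q - F p = (k : ℝ) * n.choose k * c ^ (k - 1) * (1 - c) ^ (n - k) * (1 / n) := by
    rw [eq_div_iff (sub_ne_zero.mpr hpq.ne')] at hceq
    rw [← hceq, hqp]
  have hpoint := pointwise_bound n k hk hkn c ⟨hcmem.1.le, hcmem.2.le⟩
  have hchoose0 : (0 : ℝ) < n.choose k := by exact_mod_cast Nat.choose_pos hkn'
  have key : (n.choose k : ℝ) * q ^ k * (1 - q) ^ (n - k) ≤ F q - F p := by
    rw [hFdiff]
    have h1 : (k : ℝ) * n.choose k * (q ^ (k - 1) * (1 - q) ^ (n - k))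
        ≤ (k : ℝ) * n.choose k * (c ^ (k - 1) * (1 - c) ^ (n - k)) :=
      mul_le_mul_of_nonneg_left hpoint (by positivity)
    have h2 : (n.choose k : ℝ) * q ^ k * (1 - q) ^ (n - k)
        = (k : ℝ) * n.choose k * (q ^ (k - 1) * (1 - q) ^ (n - k)) * (1 / n) := by
      have hk' : k - 1 + 1 = k := by omega
      have : q ^ k = q ^ (k - 1) * q := by rw [← pow_succ, hk']
      rw [this, hqdef]
      field_simp
    rw [h2]
    have hn0' : (0 : ℝ) ≤ 1 / n := by positivity
    calc (k : ℝ) * n.choose k * (q ^ (k - 1) * (1 - q) ^ (n - k)) * (1 / n)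
        ≤ (k : ℝ) * n.choose k * (c ^ (k - 1) * (1 - c) ^ (n - k)) * (1 / n) :=
          mul_le_mul_of_nonneg_right h1 hn0'
      _ = (k : ℝ) * n.choose k * c ^ (k - 1) * (1 - c) ^ (n - k) * (1 / n) := by ring
  have hsplit : F q = (n.choose k : ℝ) * q ^ k * (1 - q) ^ (n - k)
      + ∑ j ∈ Icc (k + 1) n, (n.choose j : ℝ) * q ^ j * (1 - q) ^ (n - j) := by
    rw [hF]
    simp only
    rw [Finset.Icc_eq_cons_Ioc hkn', Finset.sum_cons, ← Finset.Icc_add_one_left_eq_Ioc]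
  have : F p ≤ ∑ j ∈ Icc (k + 1) n, (n.choose j : ℝ) * q ^ j * (1 - q) ^ (n - j) := by
    linarith
  exact this
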